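/- arXiv:1809.10578 — 4 statements merged into one kernel-verified Lean document; each statement's English description precedes it below -/
import Mathlib

section
/- Let G be a finite simple graph and let k ≥ 1. Let G'' be the graph obtained from the disjoint union of the complete graph K_{k+1} and G by adding two new vertices v₁ and v₂, each adjacent to every vertex of G (and to no vertex of K_{k+1}), together with the edge {v₁, v₂}. Then G'' contains a clique of size k + 2 if and only if G contains a clique of size k. -/
open SimpleGraph

/-- The graph `G''` obtained from the disjoint union of the complete graph `K_{k+1}` and `G`
by adding two new vertices `v₁`, `v₂` (the two elements of `Fin 2`), each adjacent to every
vertex of `G` and to no vertex of `K_{k+1}`, together with the edge `{v₁, v₂}`. -/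
def cliqueAddTwoVertices {V : Type} (G : SimpleGraph V) (k : ℕ) :
    SimpleGraph ((Fin (k + 1) ⊕ V) ⊕ Fin 2) :=
  (((⊤ : SimpleGraph (Fin (k + 1))) ⊕g G) ⊕g (⊤ : SimpleGraph (Fin 2))) ⊔
    SimpleGraph.fromEdgeSet
      {p : Sym2 ((Fin (k + 1) ⊕ V) ⊕ Fin 2) |
        ∃ (u : V) (i : Fin 2), p = s(Sum.inl (Sum.inr u), Sum.inr i)}

/-- `G''` contains a clique of size `k + 2` iff `G` contains a clique of size `k`. -/
theorem clique_add_two_vertices_iff {V : Type} [Fintype V] (G : SimpleGraph V)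
    (k : ℕ) (hk : 1 ≤ k) :
    (∃ s, (cliqueAddTwoVertices G k).IsNClique (k + 2) s) ↔
      ∃ s, G.IsNClique k s := by
  classical
  constructor
  · rintro ⟨s, hs⟩
    have hcards : s.card = k + 2 := hs.2
    -- no vertex of K_{k+1} lies in s
    have hK : ∀ i : Fin (k + 1), Sum.inl (Sum.inl i) ∉ s := by
      intro i hi
      have hsub : s ⊆ Finset.univ.image (fun j : Fin (k + 1) => Sum.inl (Sum.inl j)) := by
        intro y hy
        rcases eq_or_ne y (Sum.inl (Sum.inl i)) with rfl | hne
        · simp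
        · have h := hs.1 hi hy (Ne.symm hne)
          rcases y with (j | v) | m
          · simp
          · simp [cliqueAddTwoVertices, Sym2.eq_iff] at h
          · simp [cliqueAddTwoVertices, Sym2.eq_iff] at h
      have h1 := Finset.card_le_card hsub
      have h2 : (Finset.univ.image (fun j : Fin (k + 1) => Sum.inl (Sum.inl j) :
          Fin (k + 1) → (Fin (k + 1) ⊕ V) ⊕ Fin 2)).card ≤ k + 1 := by
        refine le_trans Finset.card_image_le ?_
        simp
      omega
    -- extract the V-part of s
    let f : ((Fin (k + 1) ⊕ V) ⊕ Fin 2) → Option V := fun x =>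
      match x with
      | Sum.inl (Sum.inr v) => some v
      | _ => none
    have hfinj : ∀ a a' b, b ∈ f a → b ∈ f a' → a = a' := by
      rintro ((i | v) | m) ((i' | v') | m') b <;> simp [f] <;> rintro rfl rfl <;> rfl
    set s' := s.filterMap f hfinj with hs'
    have hmem : ∀ v : V, v ∈ s' ↔ Sum.inl (Sum.inr v) ∈ s := by
      intro v
      rw [hs', Finset.mem_filterMap]
      constructor
      · rintro ⟨a, ha, hfa⟩
        rcases a with (i | u) | m <;> simp [f] at hfa
        rwa [hfa] at ha
      · intro h
        exact ⟨_, h, rfl⟩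
    have hclique : G.IsClique ↑s' := by
      intro u hu v hv huv
      have h := hs.1 ((hmem u).1 hu) ((hmem v).1 hv) (by simpa using huv)
      simp [cliqueAddTwoVertices, Sym2.eq_iff] at h
      exact h
    have hcard : k ≤ s'.card := by
      have hfilt : s.filter (fun x => x.isLeft) =
          s'.image (fun v => Sum.inl (Sum.inr v)) := by
        ext x
        simp only [Finset.mem_filter, Finset.mem_image]
        constructor
        · rintro ⟨hx, hleft⟩
          rcases x with (i | v) | m
          · exact absurd hx (hK i)
          · exact ⟨v, (hmem v).2 hx, rfl⟩
          · simp at hleft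
        · rintro ⟨v, hv, rfl⟩
          exact ⟨(hmem v).1 hv, rfl⟩
      have h1 := Finset.card_filter_add_card_filter_not
        (s := s) (p := fun x => x.isLeft)
      have h2 : (s.filter (fun x => ¬ x.isLeft)).card ≤ 2 := by
        refine le_trans (Finset.card_le_card (t := {Sum.inr 0, Sum.inr 1})
          ?_) (by simp)
        intro x hx
        simp only [Finset.mem_filter] at hx
        rcases x with (i | v) | m
        · simp at hx
        · simp at hx
        · fin_cases m <;> simp
      have h3 : (s.filter (fun x => x.isLeft)).card = s'.card := by
        rw [hfilt]
        exact Finset.card_image_of_injective _ (fun a b h => by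
          simpa using h)
      omega
    obtain ⟨t, hts, htc⟩ := Finset.exists_subset_card_eq hcard
    exact ⟨t, hclique.subset hts, htc⟩
  · rintro ⟨s, hs⟩
    refine ⟨s.image (fun v => Sum.inl (Sum.inr v)) ∪ {Sum.inr 0, Sum.inr 1}, ?_, ?_⟩
    · intro a ha b hb hab
      simp only [Finset.coe_union, Finset.coe_image, Set.mem_union, Set.mem_image,
        Finset.coe_insert, Finset.coe_singleton, Set.mem_insert_iff,
        Set.mem_singleton_iff, Finset.mem_coe] at ha hb
      rcases ha with ⟨u, hu, rfl⟩ | rfl | rfl <;>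
        rcases hb with ⟨v, hv, rfl⟩ | rfl | rfl
      · have huv : u ≠ v := fun h => hab (by rw [h])
        have := hs.1 hu hv huv
        simp [cliqueAddTwoVertices, this]
      · simp [cliqueAddTwoVertices, Sym2.eq_iff]
      · simp [cliqueAddTwoVertices, Sym2.eq_iff]
      · exact ((cliqueAddTwoVertices G k).adj_symm (by
          simp [cliqueAddTwoVertices, Sym2.eq_iff]))
      · exact absurd rfl hab
      · left
        simp [SimpleGraph.sum_adj]
      · exact ((cliqueAddTwoVertices G k).adj_symm (by
          simp [cliqueAddTwoVertices, Sym2.eq_iff]))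
      · left
        simp [SimpleGraph.sum_adj]
      · exact absurd rfl hab
    · rw [Finset.card_union_of_disjoint, Finset.card_image_of_injective _
        (fun a b h => by simpa using h), hs.2]
      · simp
      · simp [Finset.disjoint_left]
end

section
/- Let k ≥ 1 and let P be the path graph on k + 2 vertices. Then: (1) P contains a subtree with at least k internal vertices; (2) для every edge e of P, the graph P − e contains no subtree with at least k internal vertices; and (3) for every vertex v of P, the graph P − v contains no subtree with at least k internal vertices. In other words, P is an extremal (minimal) graph for the property of containing a subtree with at least k internal vertices. -/
open SimpleGraph

/-- `G` contains a subtree (a connected acyclic subgraph, i.e. a tree) with at least `k`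
internal vertices (vertices of degree at least 2 in the subtree). -/
def SimpleGraph.HasSubtreeWithInternal {V : Type u} (G : SimpleGraph V) (k : ℕ) : Prop :=
  ∃ H : G.Subgraph, H.coe.IsTree ∧
    k ≤ {v : V | v ∈ H.verts ∧ 2 ≤ (H.neighborSet v).ncard}.ncard

lemma step_le {n : ℕ} {u w a b : Fin n} (huw : u.val + 1 = w.val)
    (hab : (pathGraph n).Adj a b) (hne : s(a, b) ≠ s(u, w)) :
    (a.val ≤ u.val ↔ b.val ≤ u.val) := by
  rw [pathGraph_adj] at hab
  have h1 : ¬(a.val = u.val ∧ b.val = w.val) := by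
    rintro ⟨ha, hb⟩
    exact hne (by rw [Fin.ext ha, Fin.ext hb])
  have h2 : ¬(b.val = u.val ∧ a.val = w.val) := by
    rintro ⟨hb, ha⟩
    exact hne (by rw [Fin.ext ha, Fin.ext hb, Sym2.eq_swap])
  omega

lemma reach_le {n : ℕ} {u w : Fin n} (huw : u.val + 1 = w.val) {a b : Fin n}
    (h : ((pathGraph n).deleteEdges {s(u, w)}).Reachable a b) :
    (a.val ≤ u.val ↔ b.val ≤ u.val) := by
  obtain ⟨p⟩ := h
  induction p with
  | nil => rfl
  | cons hadj p ih =>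
    rw [deleteEdges_adj, Set.mem_singleton_iff] at hadj
    exact (step_le huw hadj.1 hadj.2).trans ih

lemma pathGraph_isAcyclic (n : ℕ) : (pathGraph n).IsAcyclic := by
  rw [isAcyclic_iff_forall_adj_isBridge]
  intro v w hvw
  rw [isBridge_iff]
  refine fun hre => ?_
  have hre' : ((pathGraph n).deleteEdges {s(v, w)}).Reachable v w := hre
  have hvw' := pathGraph_adj.mp hvw
  rcases hvw' with h | h
  · have := reach_le h hre'
    omega
  · have hre'' : ((pathGraph n).deleteEdges {s(w, v)}).Reachable w v := by
      rw [show s(w, v) = s(v, w) from Sym2.eq_swap]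
      exact hre'.symm
    have := reach_le h hre''
    omega

lemma pathGraph_isTree (n : ℕ) : (pathGraph (n + 1)).IsTree :=
  ⟨pathGraph_connected n, pathGraph_isAcyclic _⟩

lemma tree_card {W : Type*} [Fintype W] {T : SimpleGraph W} (hT : T.IsTree) {k : ℕ}
    (hk : 1 ≤ k) (hcard : k ≤ {v : W | 2 ≤ (T.neighborSet v).ncard}.ncard) :
    k + 2 ≤ Fintype.card W := by
  classical
  have hdeg : ∀ v : W, (T.neighborSet v).ncard = T.degree v := by
    intro v
    rw [← Nat.card_coe_set_eq, Nat.card_eq_fintype_card, card_neighborSet_eq_degree]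
  set I : Finset W := Finset.univ.filter (fun v => 2 ≤ T.degree v) with hI
  have hset : {v : W | 2 ≤ (T.neighborSet v).ncard} = ↑I := by
    ext v; simp [hI, hdeg v]
  rw [hset, Set.ncard_coe_finset] at hcard
  -- some internal vertex exists
  obtain ⟨v, hv⟩ : I.Nonempty := Finset.card_pos.mp (lt_of_lt_of_le hk hcard)
  have hvd : 2 ≤ T.degree v := (Finset.mem_filter.mp hv).2
  have hvpos : 0 < T.degree v := by omega
  obtain ⟨u, hu⟩ := (T.degree_pos_iff_exists_adj v).mp hvpos
  have hnt : Nontrivial W := ⟨v, u, T.ne_of_adj hu⟩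
  have h2 : 2 ≤ Fintype.card W := Fintype.one_lt_card
  -- every vertex has degree ≥ 1
  have hmin : ∀ x : W, 1 ≤ T.degree x := by
    intro x
    obtain ⟨y, hy⟩ := exists_ne x
    obtain ⟨p⟩ := hT.isConnected.preconnected x y
    cases p with
    | nil => exact absurd rfl hy
    | cons h q => exact (SimpleGraph.degree_pos_iff_exists_adj T _).mpr ⟨_, h⟩
  -- degree sum
  have hsum : ∑ x : W, T.degree x = 2 * (Fintype.card W - 1) := by
    rw [T.sum_degrees_eq_twice_card_edges, ← hT.card_edgeFinset]
    omega
  have hsplit := Finset.sum_filter_add_sum_filter_not Finset.univ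
    (fun v => 2 ≤ T.degree v) (fun x => T.degree x)
  rw [← hI] at hsplit
  have hA := Finset.card_nsmul_le_sum I (fun x => T.degree x) 2
    (fun x hx => (Finset.mem_filter.mp hx).2)
  rw [smul_eq_mul] at hA
  have hB := Finset.card_nsmul_le_sum (Finset.univ.filter (fun v => ¬ 2 ≤ T.degree v))
    (fun x => T.degree x) 1 (fun x _ => hmin x)
  rw [smul_eq_mul] at hB
  have hpart : I.card + (Finset.univ.filter (fun v => ¬ 2 ≤ T.degree v)).card =
      Fintype.card W := by
    rw [hI, Finset.card_filter_add_card_filter_not]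
    rfl
  omega

lemma subtree_verts {V : Type*} [Fintype V] {G : SimpleGraph V} {k : ℕ} (hk : 1 ≤ k)
    (H : G.Subgraph) (ht : H.coe.IsTree)
    (hcard : k ≤ {v : V | v ∈ H.verts ∧ 2 ≤ (H.neighborSet v).ncard}.ncard) :
    k + 2 ≤ H.verts.ncard := by
  classical
  have hnbr : ∀ x : H.verts, (H.coe.neighborSet x).ncard = (H.neighborSet x.val).ncard := by
    intro x
    rw [← Nat.card_coe_set_eq, ← Nat.card_coe_set_eq]
    exact Nat.card_congr (Subgraph.coeNeighborSetEquiv x)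
  have himg : {v : V | v ∈ H.verts ∧ 2 ≤ (H.neighborSet v).ncard} =
      Subtype.val '' {x : H.verts | 2 ≤ (H.coe.neighborSet x).ncard} := by
    ext v
    simp only [Set.mem_image, Set.mem_setOf_eq]
    constructor
    · rintro ⟨hv, h2⟩
      exact ⟨⟨v, hv⟩, by rw [hnbr]; exact h2, rfl⟩
    · rintro ⟨⟨x, hx⟩, h2, rfl⟩
      rw [hnbr] at h2
      exact ⟨hx, h2⟩
  rw [himg, Set.ncard_image_of_injective _ Subtype.val_injective] at hcard
  have := tree_card ht hk hcard
  rwa [← Nat.card_coe_set_eq, Nat.card_eq_fintype_card]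

lemma part1 (k : ℕ) (hk : 1 ≤ k) : ∃ H : (pathGraph (k + 2)).Subgraph, H.coe.IsTree ∧
    k ≤ {v : Fin (k + 2) | v ∈ H.verts ∧ 2 ≤ (H.neighborSet v).ncard}.ncard := by
  refine ⟨⊤, ⟨?_, ?_⟩, ?_⟩
  · rw [Subgraph.topIso.connected_iff]
    exact pathGraph_connected (k + 1)
  · intro v c hc
    have hinj : Function.Injective (Subgraph.topIso (G := pathGraph (k + 2))).toHom := by
      intro a b hab
      exact (Subgraph.topIso (G := pathGraph (k + 2))).injective hab
    exact pathGraph_isAcyclic (k + 2) (c.map _) (hc.map hinj)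
  · have hsub : {v : Fin (k + 2) | 0 < v.val ∧ v.val < k + 1} ⊆
        {v : Fin (k + 2) | v ∈ (⊤ : (pathGraph (k + 2)).Subgraph).verts ∧
          2 ≤ ((⊤ : (pathGraph (k + 2)).Subgraph).neighborSet v).ncard} := by
      rintro v ⟨h0, h1⟩
      refine ⟨trivial, ?_⟩
      rw [Subgraph.neighborSet_top]
      show 1 < _
      rw [Set.one_lt_ncard_iff]
      refine ⟨⟨v.val - 1, by omega⟩, ⟨v.val + 1, by omega⟩, ?_, ?_, ?_⟩
      · rw [SimpleGraph.mem_neighborSet, pathGraph_adj]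
        exact Or.inr (Nat.succ_pred_eq_of_pos h0)
      · rw [SimpleGraph.mem_neighborSet, pathGraph_adj]
        exact Or.inl rfl
      · simp only [ne_eq, Fin.ext_iff, Fin.val_mk]; omega
    have hk' : k ≤ {v : Fin (k + 2) | 0 < v.val ∧ v.val < k + 1}.ncard := by
      have := Set.ncard_le_ncard_of_injOn
        (s := (Set.univ : Set (Fin k)))
        (t := {v : Fin (k + 2) | 0 < v.val ∧ v.val < k + 1})
        (fun i : Fin k => (⟨i.val + 1, by omega⟩ : Fin (k + 2)))
        (fun i _ => ⟨by simp, by simp only [Set.mem_setOf_eq, Fin.val_mk]; omega⟩)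
        (fun a _ b _ hab => by simpa [Fin.ext_iff] using hab)
        (Set.toFinite _)
      simpa [Set.ncard_univ] using this
    exact hk'.trans (Set.ncard_le_ncard hsub (Set.toFinite _))

lemma no_del {k : ℕ} (hk : 1 ≤ k) {u w : Fin (k + 2)} (huw : u.val + 1 = w.val) :
    ¬ ∃ H : ((pathGraph (k + 2)).deleteEdges {s(u, w)}).Subgraph, H.coe.IsTree ∧
      k ≤ {v : Fin (k + 2) | v ∈ H.verts ∧ 2 ≤ (H.neighborSet v).ncard}.ncard := by
  rintro ⟨H, hT, hcard⟩
  have hverts := subtree_verts hk H hT hcard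
  have hreach : ∀ a ∈ H.verts, ∀ b ∈ H.verts,
      ((pathGraph (k + 2)).deleteEdges {s(u, w)}).Reachable a b := by
    intro a ha b hb
    exact (hT.isConnected.preconnected ⟨a, ha⟩ ⟨b, hb⟩).map H.hom
  obtain ⟨⟨x0, hx0⟩⟩ := hT.isConnected.nonempty
  have hu : u.val ≤ k := by omega
  by_cases hx : x0.val ≤ u.val
  · have hall : ∀ b ∈ H.verts, b.val ≤ u.val := fun b hb =>
      (reach_le huw (hreach x0 hx0 b hb)).mp hx
    have hle : H.verts.ncard ≤ k + 1 := by
      have := Set.ncard_le_ncard_of_injOn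
        (t := (Set.univ : Set (Fin (k + 1))))
        (fun x : Fin (k + 2) => (⟨min x.val k, by omega⟩ : Fin (k + 1)))
        (fun x _ => Set.mem_univ _)
        (fun a ha b hb hab => by
          have ha' := hall a ha; have hb' := hall b hb
          simp only [Fin.mk.injEq] at hab
          exact Fin.ext (by omega))
        (Set.toFinite _)
      simpa [Set.ncard_univ] using this
    omega
  · have hall : ∀ b ∈ H.verts, ¬ b.val ≤ u.val := fun b hb h =>
      hx ((reach_le huw (hreach x0 hx0 b hb)).mpr h)
    have hle : H.verts.ncard ≤ k + 1 := by
      have := Set.ncard_le_ncard_of_injOn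
        (t := (Set.univ : Set (Fin (k + 1))))
        (fun x : Fin (k + 2) => (⟨x.val - 1, by omega⟩ : Fin (k + 1)))
        (fun x _ => Set.mem_univ _)
        (fun a ha b hb hab => by
          have ha' := hall a ha; have hb' := hall b hb
          simp only [Fin.mk.injEq] at hab
          exact Fin.ext (by omega))
        (Set.toFinite _)
      simpa [Set.ncard_univ] using this
    omega

lemma no_vert {k : ℕ} (hk : 1 ≤ k) (v : Fin (k + 2)) :
    ¬ ∃ H : ((pathGraph (k + 2)).induce {v}ᶜ).Subgraph, H.coe.IsTree ∧
      k ≤ {x : ({v}ᶜ : Set (Fin (k + 2))) | x ∈ H.verts ∧ 2 ≤ (H.neighborSet x).ncard}.ncard := by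
  rintro ⟨H, hT, hcard⟩
  have hverts := subtree_verts hk H hT hcard
  have hle : H.verts.ncard ≤ k + 1 := by
    have h1 : H.verts.ncard ≤ (Set.univ : Set ({v}ᶜ : Set (Fin (k + 2)))).ncard :=
      Set.ncard_le_ncard (Set.subset_univ _) (Set.toFinite _)
    rw [Set.ncard_univ, Nat.card_eq_fintype_card] at h1
    have h2 : Fintype.card ({v}ᶜ : Set (Fin (k + 2))) = k + 1 := by
      rw [Fintype.card_compl_set, Set.card_singleton, Fintype.card_fin]
      omega
    omega
  omega

/-- The path graph `P` on `k + 2` vertices is extremal (minimal) for containing a subtree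
with at least `k ≥ 1` internal vertices: `P` contains such a subtree, but no edge-deleted
graph `P - e` and no vertex-deleted graph `P - v` does. -/
theorem pathGraph_extremal_for_subtree_internal (k : ℕ) (hk : 1 ≤ k) :
    (pathGraph (k + 2)).HasSubtreeWithInternal k ∧
    (∀ e ∈ (pathGraph (k + 2)).edgeSet,
      ¬ ((pathGraph (k + 2)).deleteEdges {e}).HasSubtreeWithInternal k) ∧
    (∀ v : Fin (k + 2),
      ¬ ((pathGraph (k + 2)).induce {v}ᶜ).HasSubtreeWithInternal k) := by
  refine ⟨part1 k hk, ?_, fun v => no_vert hk v⟩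
  intro e
  induction e using Sym2.ind with
  | _ u w =>
    intro he hsub
    rw [mem_edgeSet, pathGraph_adj] at he
    rcases he with h | h
    · exact no_del hk h hsub
    · have hsub' : ∃ H : ((pathGraph (k + 2)).deleteEdges {s(w, u)}).Subgraph, H.coe.IsTree ∧
          k ≤ {v : Fin (k + 2) | v ∈ H.verts ∧ 2 ≤ (H.neighborSet v).ncard}.ncard := by
        rw [show s(w, u) = s(u, w) from Sym2.eq_swap]
        exact hsub
      exact no_del hk h hsub'
end

section
/- Let k ≥ 1, let P be the path graph on k + 2 vertices, let e be any edge of P, and let G be any finite simple graph. Then the disjoint union G ∪ (P − e) contains a subtree with at least k internal vertices if and only if G contains a subtree with at least k internal vertices. -/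
open SimpleGraph

namespace SubtreeAux

variable {V W : Type*} {G : SimpleGraph V} {G' : SimpleGraph W}

lemma map_neighborSet (f : G →g G') (hf : Function.Injective f) (H : G.Subgraph) (v : V) :
    (H.map f).neighborSet (f v) = f '' H.neighborSet v := by
  ext w
  simp only [Subgraph.mem_neighborSet, Subgraph.map_adj, Relation.Map, Set.mem_image]
  constructor
  · rintro ⟨a, b, hab, ha, rfl⟩
    exact ⟨b, by rwa [hf ha] at hab, rfl⟩
  · rintro ⟨b, hb, rfl⟩
    exact ⟨v, b, hb, rfl, rfl⟩

lemma map_internal (f : G →g G') (hf : Function.Injective f) (H : G.Subgraph) :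
    {w : W | w ∈ (H.map f).verts ∧ 2 ≤ ((H.map f).neighborSet w).ncard} =
      f '' {v : V | v ∈ H.verts ∧ 2 ≤ (H.neighborSet v).ncard} := by
  ext w
  constructor
  · rintro ⟨⟨v, hv, rfl⟩, h2⟩
    refine ⟨v, ⟨hv, ?_⟩, rfl⟩
    rwa [map_neighborSet f hf, Set.ncard_image_of_injective _ hf] at h2
  · rintro ⟨v, ⟨hv, h2⟩, rfl⟩
    exact ⟨⟨v, hv, rfl⟩,
      by rwa [map_neighborSet f hf, Set.ncard_image_of_injective _ hf]⟩

/-- The coercion of a mapped subgraph is isomorphic to the coercion of the subgraph,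
when the map is injective. -/
noncomputable def mapCoeIso (f : G →g G') (hf : Function.Injective f) (H : G.Subgraph) :
    H.coe ≃g (H.map f).coe where
  toEquiv := Equiv.Set.image f H.verts hf
  map_rel_iff' := by
    intro a b
    simp only [Equiv.Set.image_apply, Subgraph.coe_adj, Subgraph.map_adj, Relation.Map]
    constructor
    · rintro ⟨u, v, huv, hu, hv⟩
      rwa [hf hu, hf hv] at huv
    · intro h
      exact ⟨a, b, h, rfl, rfl⟩

lemma isTree_of_iso {A B : Type*} {G1 : SimpleGraph A} {G2 : SimpleGraph B} (e : G1 ≃g G2)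
    (h : G1.IsTree) : G2.IsTree := by
  constructor
  · exact e.connected_iff.mp h.isConnected
  · intro v c hc
    exact h.IsAcyclic (c.map e.symm.toHom)
      ((Walk.map_isCycle_iff_of_injective e.symm.injective).2 hc)

lemma hasSubtree_of_map (f : G →g G') (hf : Function.Injective f) {k : ℕ}
    (h : G.HasSubtreeWithInternal k) : G'.HasSubtreeWithInternal k := by
  obtain ⟨H, ht, hcard⟩ := h
  refine ⟨H.map f, isTree_of_iso (mapCoeIso f hf H) ht, ?_⟩
  rw [map_internal f hf, Set.ncard_image_of_injective _ hf]
  exact hcard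

section Sum

variable {A B : Type*} {G1 : SimpleGraph A} {G2 : SimpleGraph B}

/-- Restrict a subgraph of a disjoint sum to the left factor. -/
def pullLeft (H : (G1 ⊕g G2).Subgraph) : G1.Subgraph where
  verts := Sum.inl ⁻¹' H.verts
  Adj u v := H.Adj (Sum.inl u) (Sum.inl v)
  adj_sub h := H.adj_sub h
  edge_vert h := H.edge_vert h
  symm := ⟨fun _ _ h => H.adj_symm h⟩

/-- Restrict a subgraph of a disjoint sum to the right factor. -/
def pullRight (H : (G1 ⊕g G2).Subgraph) : G2.Subgraph where
  verts := Sum.inr ⁻¹' H.verts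
  Adj u v := H.Adj (Sum.inr u) (Sum.inr v)
  adj_sub h := H.adj_sub h
  edge_vert h := H.edge_vert h
  symm := ⟨fun _ _ h => H.adj_symm h⟩

lemma pullLeft_map (H : (G1 ⊕g G2).Subgraph) (hsub : H.verts ⊆ Set.range Sum.inl) :
    (pullLeft H).map (Embedding.sumInl : G1 ↪g G1 ⊕g G2).toHom = H := by
  ext x y
  · constructor
    · rintro ⟨v, hv, rfl⟩
      exact hv
    · intro hx
      obtain ⟨u, rfl⟩ := hsub hx
      exact ⟨u, hx, rfl⟩
  · constructor
    · rintro ⟨u, v, huv, rfl, rfl⟩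
      exact huv
    · intro h
      obtain ⟨u, rfl⟩ := hsub (H.edge_vert h)
      obtain ⟨v, rfl⟩ := hsub (H.edge_vert h.symm)
      exact ⟨u, v, h, rfl, rfl⟩

lemma pullRight_map (H : (G1 ⊕g G2).Subgraph) (hsub : H.verts ⊆ Set.range Sum.inr) :
    (pullRight H).map (Embedding.sumInr : G2 ↪g G1 ⊕g G2).toHom = H := by
  ext x y
  · constructor
    · rintro ⟨v, hv, rfl⟩
      exact hv
    · intro hx
      obtain ⟨u, rfl⟩ := hsub hx
      exact ⟨u, hx, rfl⟩
  · constructor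
    · rintro ⟨u, v, huv, rfl, rfl⟩
      exact huv
    · intro h
      obtain ⟨u, rfl⟩ := hsub (H.edge_vert h)
      obtain ⟨v, rfl⟩ := hsub (H.edge_vert h.symm)
      exact ⟨u, v, h, rfl, rfl⟩

lemma isLeft_eq_of_adj {u v : A ⊕ B} (h : (G1 ⊕g G2).Adj u v) :
    u.isLeft = v.isLeft := by
  cases u <;> cases v <;> simp_all [SimpleGraph.sum]

lemma isLeft_eq_of_walk {H : (G1 ⊕g G2).Subgraph} {a b : H.verts}
    (p : H.coe.Walk a b) : (a : A ⊕ B).isLeft = (b : A ⊕ B).isLeft := by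
  induction p with
  | nil => rfl
  | cons h _ ih => exact (isLeft_eq_of_adj (H.adj_sub h)).trans ih

end Sum

lemma connected_degree_pos {A : Type*} [Fintype A] {G : SimpleGraph A}
    (hc : G.Connected) (h2 : 1 < Fintype.card A) (v : A) [Fintype (G.neighborSet v)] :
    0 < G.degree v := by
  obtain ⟨w, hw⟩ := Fintype.exists_ne_of_one_lt_card h2 v
  obtain ⟨p⟩ := hc.preconnected v w
  rw [degree_pos_iff_exists_adj]
  cases p with
  | nil => exact absurd rfl hw
  | cons h _ => exact ⟨_, h⟩

lemma pathGraph_edgeSet_ncard_le (n : ℕ) : ((pathGraph (n + 1)).edgeSet).ncard ≤ n := by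
  have hsub : (pathGraph (n + 1)).edgeSet ⊆
      (fun i : Fin n => s(Fin.castSucc i, Fin.succ i)) '' Set.univ := by
    intro e he
    induction e using Sym2.ind with
    | _ u v =>
      rw [mem_edgeSet, pathGraph_adj] at he
      rcases he with h | h
      · have hu : u.val < n := by omega
        refine ⟨⟨u.val, hu⟩, trivial, ?_⟩
        have h1 : Fin.castSucc (⟨u.val, hu⟩ : Fin n) = u := by
          ext; simp
        have h2 : Fin.succ (⟨u.val, hu⟩ : Fin n) = v := by
          ext; simp [Fin.val_succ, h]
        show s(Fin.castSucc (⟨u.val, hu⟩ : Fin n), Fin.succ (⟨u.val, hu⟩ : Fin n)) = s(u, v)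
        rw [h1, h2]
      · have hv : v.val < n := by omega
        refine ⟨⟨v.val, hv⟩, trivial, ?_⟩
        have h1 : Fin.castSucc (⟨v.val, hv⟩ : Fin n) = v := by
          ext; simp
        have h2 : Fin.succ (⟨v.val, hv⟩ : Fin n) = u := by
          ext; simp [Fin.val_succ, h]
        show s(Fin.castSucc (⟨v.val, hv⟩ : Fin n), Fin.succ (⟨v.val, hv⟩ : Fin n)) = s(u, v)
        rw [h1, h2, Sym2.eq_swap]
  calc ((pathGraph (n + 1)).edgeSet).ncard
      ≤ ((fun i : Fin n => s(Fin.castSucc i, Fin.succ i)) '' Set.univ).ncard :=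
        Set.ncard_le_ncard hsub (Set.finite_univ.image _)
    _ ≤ (Set.univ : Set (Fin n)).ncard := Set.ncard_image_le Set.finite_univ
    _ = n := by simp [Set.ncard_univ]

/-- Degree equals the `ncard` of the neighbor set, for any `Fintype` instance. -/
lemma degree_eq_ncard {A : Type*} (G : SimpleGraph A) (v : A) [Fintype (G.neighborSet v)] :
    G.degree v = (G.neighborSet v).ncard := by
  rw [← card_neighborSet_eq_degree, ← Nat.card_eq_fintype_card, Nat.card_coe_set_eq]

lemma connected_ncard_neighborSet_pos {A : Type*} [Fintype A] {G : SimpleGraph A}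
    (hc : G.Connected) (h2 : 1 < Fintype.card A) (v : A) :
    0 < (G.neighborSet v).ncard := by
  classical
  rw [← degree_eq_ncard]
  exact connected_degree_pos hc h2 v

/-- A subtree of the path graph on `k+2` vertices minus an edge cannot have `k ≥ 1`
internal vertices. -/
lemma no_subtree_in_path_minus_edge (k : ℕ) (hk : 1 ≤ k) (e : Sym2 (Fin (k + 2)))
    (he : e ∈ (pathGraph (k + 2)).edgeSet)
    (h : ((pathGraph (k + 2)).deleteEdges {e}).HasSubtreeWithInternal k) : False := by
  classical
  obtain ⟨K, ht, hcard⟩ := h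
  haveI : Fintype K.verts := Fintype.ofFinite _
  haveI : Fintype K.coe.edgeSet := Fintype.ofFinite _
  haveI : DecidableRel K.coe.Adj := Classical.decRel _
  have h1 : K.coe.edgeFinset.card + 1 = Fintype.card K.verts := ht.card_edgeFinset
  set n := Fintype.card K.verts with hn
  set t := K.coe.edgeFinset.card with htdef
  -- edge count bound
  have hP'card : ((pathGraph (k + 2)).deleteEdges {e}).edgeSet.ncard ≤ k := by
    have hdel : ((pathGraph (k + 2)).deleteEdges {e}).edgeSet =
        (pathGraph (k + 2)).edgeSet \ {e} := edgeSet_deleteEdges {e}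
    have hfin : ((pathGraph (k + 2)).edgeSet).Finite := Set.toFinite _
    have hd := Set.ncard_diff_singleton_add_one he hfin
    have hle : ((pathGraph (k + 2)).edgeSet).ncard ≤ k + 1 :=
      pathGraph_edgeSet_ncard_le (k + 1)
    rw [hdel]
    omega
  have h2 : t ≤ k := by
    have hinj : Function.Injective (Sym2.map (Subtype.val : K.verts → Fin (k + 2))) :=
      Sym2.map.injective Subtype.val_injective
    have e1 : K.coe.edgeSet.ncard = K.edgeSet.ncard := by
      rw [← K.image_coe_edgeSet_coe, Set.ncard_image_of_injective _ hinj]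
    have e2 : K.edgeSet.ncard ≤ ((pathGraph (k + 2)).deleteEdges {e}).edgeSet.ncard :=
      Set.ncard_le_ncard K.edgeSet_subset (Set.toFinite _)
    have e3 : K.coe.edgeSet.ncard = t := by
      rw [htdef, edgeFinset, Set.ncard_eq_toFinset_card']
    omega
  -- internal vertex set
  set Sv : Set K.verts := {x : K.verts | 2 ≤ (K.coe.neighborSet x).ncard} with hSv
  have hncard_eq : ∀ x : K.verts, (K.coe.neighborSet x).ncard = (K.neighborSet x.val).ncard := by
    intro x
    rw [← Nat.card_coe_set_eq, ← Nat.card_coe_set_eq]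
    exact Nat.card_congr (Subgraph.coeNeighborSetEquiv x)
  have hS0 : {v : Fin (k + 2) | v ∈ K.verts ∧ 2 ≤ (K.neighborSet v).ncard} =
      Subtype.val '' Sv := by
    ext v
    constructor
    · rintro ⟨hv, h2v⟩
      exact ⟨⟨v, hv⟩, by rw [hSv, Set.mem_setOf_eq, hncard_eq]; exact h2v, rfl⟩
    · rintro ⟨⟨v, hv⟩, hx, rfl⟩
      rw [hSv, Set.mem_setOf_eq, hncard_eq] at hx
      exact ⟨hv, hx⟩
  have hIcard : k ≤ Sv.toFinset.card := by
    rw [hS0, Set.ncard_image_of_injective _ Subtype.val_injective,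
      Set.ncard_eq_toFinset_card'] at hcard
    exact hcard
  -- there is an internal vertex, so `1 < n`
  have hn2 : 1 < n := by
    have hpos : 0 < Sv.toFinset.card := lt_of_lt_of_le hk hIcard
    obtain ⟨x, hx⟩ := Finset.card_pos.mp hpos
    rw [Set.mem_toFinset, hSv, Set.mem_setOf_eq] at hx
    have hlt := K.coe.degree_lt_card_verts x
    rw [degree_eq_ncard] at hlt
    omega
  -- degree sum
  have het : K.coe.edgeSet.ncard = t := by
    rw [htdef, edgeFinset, Set.ncard_eq_toFinset_card']
  have hsum : ∑ x : K.verts, (K.coe.neighborSet x).ncard = 2 * K.coe.edgeSet.ncard := by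
    have hds := K.coe.sum_degrees_eq_twice_card_edges
    rw [edgeFinset, ← Set.ncard_eq_toFinset_card'] at hds
    rw [← hds]
    refine Finset.sum_congr rfl fun x _ => ?_
    have : ∀ (inst : Fintype (K.coe.neighborSet x)), @degree _ K.coe x inst = (K.coe.neighborSet x).ncard := by
      intro inst
      rw [← @card_neighborSet_eq_degree _ _ _ inst, ← Nat.card_eq_fintype_card,
        Nat.card_coe_set_eq]
    exact (this _).symm
  have hsplit : ∑ x ∈ Sv.toFinset, (K.coe.neighborSet x).ncard
      + ∑ x ∈ Sv.toFinsetᶜ, (K.coe.neighborSet x).ncard = 2 * K.coe.edgeSet.ncard := by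
    rw [Finset.sum_add_sum_compl, hsum]
  have hb1 : 2 * Sv.toFinset.card ≤ ∑ x ∈ Sv.toFinset, (K.coe.neighborSet x).ncard := by
    calc 2 * Sv.toFinset.card = ∑ _x ∈ Sv.toFinset, 2 := by
          rw [Finset.sum_const, smul_eq_mul]; ring
      _ ≤ ∑ x ∈ Sv.toFinset, (K.coe.neighborSet x).ncard := by
          refine Finset.sum_le_sum fun x hx => ?_
          rw [Set.mem_toFinset] at hx
          exact hx
  have hb2 : Sv.toFinsetᶜ.card ≤ ∑ x ∈ Sv.toFinsetᶜ, (K.coe.neighborSet x).ncard := by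
    calc Sv.toFinsetᶜ.card = ∑ _x ∈ Sv.toFinsetᶜ, 1 := by
          rw [Finset.sum_const, smul_eq_mul, mul_one]
      _ ≤ ∑ x ∈ Sv.toFinsetᶜ, (K.coe.neighborSet x).ncard := by
          refine Finset.sum_le_sum fun x _ => ?_
          exact connected_ncard_neighborSet_pos ht.isConnected hn2 x
  have hccard : Sv.toFinsetᶜ.card = n - Sv.toFinset.card := by
    rw [Finset.card_compl, hn]
  have hle_n : Sv.toFinset.card ≤ n := by
    rw [hn, ← Finset.card_univ]
    exact Finset.card_le_card (Finset.subset_univ _)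
  omega

end SubtreeAux

open SubtreeAux in
/-- For the path graph `P` on `k + 2` vertices (`k ≥ 1`) with any edge `e` removed, the
disjoint union `G ∪ (P - e)` contains a subtree with at least `k` internal vertices iff
`G` does. -/
theorem subtree_disjoint_union_pathGraph_deleteEdge_iff {V : Type} [Fintype V]
    (k : ℕ) (hk : 1 ≤ k) (e : Sym2 (Fin (k + 2)))
    (he : e ∈ (pathGraph (k + 2)).edgeSet) (G : SimpleGraph V) :
    (G ⊕g (pathGraph (k + 2)).deleteEdges {e}).HasSubtreeWithInternal k ↔
      G.HasSubtreeWithInternal k := by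
  set P' := (pathGraph (k + 2)).deleteEdges {e} with hP'
  constructor
  · rintro ⟨H, ht, hcard⟩
    obtain ⟨v0⟩ := ht.isConnected.nonempty
    rcases hside : (v0 : V ⊕ Fin (k + 2)) with a | a
    · -- all vertices on the left
      have hsub : H.verts ⊆ Set.range Sum.inl := by
        intro w hw
        have := isLeft_eq_of_walk (ht.isConnected.preconnected ⟨w, hw⟩ v0).some
        rw [hside] at this
        simp only [Sum.isLeft_inl] at this
        rcases hww : w with b | b
        · exact ⟨b, rfl⟩
        · rw [hww] at this; simp at this
      have hinj : Function.Injective ((Embedding.sumInl : G ↪g G ⊕g P').toHom) :=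
        fun x y hxy => Sum.inl_injective hxy
      have heq := pullLeft_map H hsub
      rw [← heq] at ht hcard
      refine ⟨pullLeft H, isTree_of_iso (mapCoeIso _ hinj (pullLeft H)).symm ht, ?_⟩
      rwa [map_internal _ hinj, Set.ncard_image_of_injective _ hinj] at hcard
    · -- all vertices on the right: contradiction
      exfalso
      have hsub : H.verts ⊆ Set.range Sum.inr := by
        intro w hw
        have := isLeft_eq_of_walk (ht.isConnected.preconnected ⟨w, hw⟩ v0).some
        rw [hside] at this
        simp only [Sum.isLeft_inr] at this
        rcases hww : w with b | b
        · rw [hww] at this; simp at this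
        · exact ⟨b, rfl⟩
      have hinj : Function.Injective ((Embedding.sumInr : P' ↪g G ⊕g P').toHom) :=
        fun x y hxy => Sum.inr_injective hxy
      have heq := pullRight_map H hsub
      rw [← heq] at ht hcard
      refine no_subtree_in_path_minus_edge k hk e he ⟨pullRight H,
        isTree_of_iso (mapCoeIso _ hinj (pullRight H)).symm ht, ?_⟩
      rwa [map_internal _ hinj, Set.ncard_image_of_injective _ hinj] at hcard
  · exact fun h => hasSubtree_of_map (Embedding.sumInl : G ↪g G ⊕g P').toHom
      (fun x y hxy => Sum.inl_injective hxy) h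
end

section
/- Let k be a natural number and let G be a finite simple graph with no isolated vertices that has more than 2k vertices and possesses a vertex cover of size at most k. Then G admits a crown decomposition (C, H, R) with |R| ≤ 2k. -/
open SimpleGraph

/-- A set of vertices `S` is a vertex cover of `G` if it contains at least one endpoint of
every edge of `G`. -/
def SimpleGraph.IsVertexCover' {V : Type u} (G : SimpleGraph V) (S : Set V) : Prop :=
  ∀ ⦃u v : V⦄, G.Adj u v → u ∈ S ∨ v ∈ S

/-- `(C, H, R)` is a crown decomposition of `G` with saturating matching given by `f`:
`C`, `H`, `R` partition the vertex set, `C` is a nonempty independent set, there are no edges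
between `C` and `R`, and `f` matches each vertex `h ∈ H` injectively to a distinct vertex
`f h ∈ C` along an edge of `G` (a matching of `G`-edges between `C` and `H` saturating `H`).
-/
def SimpleGraph.IsCrownDecompositionWith {V : Type u} (G : SimpleGraph V)
    (C H R : Set V) (f : V → V) : Prop :=
  C.Nonempty ∧
  (∀ u ∈ C, ∀ v ∈ C, ¬ G.Adj u v) ∧
  (∀ u ∈ C, ∀ v ∈ R, ¬ G.Adj u v) ∧
  (∀ v : V, v ∈ C ∨ v ∈ H ∨ v ∈ R) ∧
  Disjoint C H ∧ Disjoint C R ∧ Disjoint H R ∧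
  (∀ h ∈ H, f h ∈ C ∧ G.Adj h (f h)) ∧
  Set.InjOn f H

/-- `(C, H, R)` is a crown decomposition of `G`. -/
def SimpleGraph.IsCrownDecomposition {V : Type u} (G : SimpleGraph V)
    (C H R : Set V) : Prop :=
  ∃ f : V → V, G.IsCrownDecompositionWith C H R f

/-- A finite simple graph with no isolated vertices, more than `2k` vertices, and a vertex
cover of size at most `k` admits a crown decomposition `(C, H, R)` with `|R| ≤ 2k`. -/
theorem crown_decomposition_of_small_vertexCover {V : Type} [Fintype V]
    (G : SimpleGraph V) (k : ℕ)
    (hiso : ∀ v : V, ∃ u : V, G.Adj v u)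
    (hcard : 2 * k < Fintype.card V)
    (hvc : ∃ S : Set V, G.IsVertexCover' S ∧ S.ncard ≤ k) :
    ∃ C H R : Set V, G.IsCrownDecomposition C H R ∧ R.ncard ≤ 2 * k := by
  classical
  obtain ⟨S, hSvc, hScard⟩ := hvc
  set Sf : Finset V := S.toFinite.toFinset with hSf
  have hSfS : ∀ v, v ∈ Sf ↔ v ∈ S := fun v => S.toFinite.mem_toFinset
  have hSfcard : Sf.card ≤ k := by
    rwa [← Set.ncard_eq_toFinset_card S S.toFinite]
  -- neighbors in the independent set I = Sfᶜ
  set N : Finset V → Finset V :=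
    fun T => Finset.univ.filter (fun v => v ∉ Sf ∧ ∃ t ∈ T, G.Adj t v) with hN
  have hNmem : ∀ T v, v ∈ N T ↔ v ∉ Sf ∧ ∃ t ∈ T, G.Adj t v := by
    intro T v; simp [hN]
  -- defect function
  set d : Finset V → ℤ := fun T => (T.card : ℤ) - ((N T).card : ℤ) with hd
  obtain ⟨T0, hT0mem, hT0max⟩ :=
    Finset.exists_max_image Sf.powerset d ⟨∅, by simp⟩
  have hT0S : T0 ⊆ Sf := Finset.mem_powerset.mp hT0mem
  have hNT0card : (N T0).card ≤ T0.card := by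
    have h0 := hT0max ∅ (by simp)
    have hNe : N ∅ = ∅ := by
      ext v; simp [hNmem]
    simp only [hd, hNe, Finset.card_empty] at h0
    exact_mod_cast by linarith [h0]
  -- key Hall-type inequality
  have key : ∀ A : Finset V, A ⊆ Sf \ T0 → A.card ≤ (N A \ N T0).card := by
    intro A hA
    have hAS : A ⊆ Sf := hA.trans (Finset.sdiff_subset)
    have hdisj : Disjoint T0 A := by
      refine Finset.disjoint_left.mpr fun x hx hxA => ?_
      exact (Finset.mem_sdiff.mp (hA hxA)).2 hx
    have hmem : T0 ∪ A ∈ Sf.powerset :=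
      Finset.mem_powerset.mpr (Finset.union_subset hT0S hAS)
    have h1 := hT0max _ hmem
    have hcardU : (T0 ∪ A).card = T0.card + A.card :=
      Finset.card_union_of_disjoint hdisj
    have hNU : N (T0 ∪ A) = N T0 ∪ (N A \ N T0) := by
      ext v
      simp only [hNmem, Finset.mem_union, Finset.mem_sdiff]
      constructor
      · rintro ⟨hv, t, ht, hadj⟩
        rcases ht with h | h
        · exact Or.inl ⟨hv, t, h, hadj⟩
        · by_cases hvT : v ∈ N T0
          · exact Or.inl ((hNmem T0 v).mp hvT)
          · exact Or.inr ⟨⟨hv, t, h, hadj⟩, fun hc => hvT ((hNmem T0 v).mpr hc)⟩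
      · rintro (⟨hv, t, ht, hadj⟩ | ⟨⟨hv, t, ht, hadj⟩, _⟩)
        · exact ⟨hv, t, Or.inl ht, hadj⟩
        · exact ⟨hv, t, Or.inr ht, hadj⟩
    have hNUcard : (N (T0 ∪ A)).card = (N T0).card + (N A \ N T0).card := by
      rw [hNU]
      exact Finset.card_union_of_disjoint Finset.disjoint_sdiff
    simp only [hd, hcardU, hNUcard] at h1
    exact_mod_cast by push_cast at h1 ⊢; linarith
  -- the three pieces
  set Hf : Finset V := Sf \ T0 with hHf
  set Cf : Finset V := Sfᶜ \ N T0 with hCf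
  set Rf : Finset V := T0 ∪ N T0 with hRf
  -- Hall's theorem for the matching
  set t : {x : V // x ∈ Hf} → Finset V := fun h => N {h.1} \ N T0 with ht
  have hall : ∀ s : Finset {x : V // x ∈ Hf}, s.card ≤ (s.biUnion t).card := by
    intro s
    set A : Finset V := s.image Subtype.val with hA
    have hAcard : A.card = s.card := Finset.card_image_of_injective _ Subtype.val_injective
    have hAsub : A ⊆ Sf \ T0 := by
      intro x hx
      obtain ⟨y, hy, rfl⟩ := Finset.mem_image.mp hx
      exact y.2
    have hbi : s.biUnion t = N A \ N T0 := by
      ext v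
      simp only [Finset.mem_biUnion, ht, Finset.mem_sdiff, hNmem, hA, Finset.mem_image]
      constructor
      · rintro ⟨a, ha, ⟨hv, x, hx, hadj⟩, hnT⟩
        rcases Finset.mem_singleton.mp hx with rfl
        exact ⟨⟨hv, a.1, ⟨a, ha, rfl⟩, hadj⟩, hnT⟩
      · rintro ⟨⟨hv, x, ⟨a, ha, rfl⟩, hadj⟩, hnT⟩
        exact ⟨a, ha, ⟨hv, a.1, Finset.mem_singleton_self _, hadj⟩, hnT⟩
    rw [hbi, ← hAcard]
    exact key A hAsub
  obtain ⟨f0, hf0inj, hf0mem⟩ :=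
    (Finset.all_card_le_biUnion_card_iff_exists_injective t).mp hall
  set f : V → V := fun v => if hv : v ∈ Hf then f0 ⟨v, hv⟩ else v with hf
  -- cardinality facts
  have hNT0sub : N T0 ⊆ Sfᶜ := by
    intro v hv
    exact Finset.mem_compl.mpr ((hNmem T0 v).mp hv).1
  have hCfcard : Cf.card = Fintype.card V - Sf.card - (N T0).card := by
    rw [hCf, Finset.card_sdiff_of_subset hNT0sub, Finset.card_compl]
  have hCfpos : 0 < Cf.card := by
    have h1 : T0.card ≤ k := le_trans (Finset.card_le_card hT0S) hSfcard
    have h2 : (N T0).card ≤ k := le_trans hNT0card h1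
    omega
  refine ⟨↑Cf, ↑Hf, ↑Rf, ⟨f, ?_, ?_, ?_, ?_, ?_, ?_, ?_, ?_, ?_⟩, ?_⟩
  · -- C nonempty
    obtain ⟨v, hv⟩ := Finset.card_pos.mp hCfpos
    exact ⟨v, hv⟩
  · -- C independent
    intro u hu v hv hadj
    have hu' : u ∉ Sf := Finset.mem_compl.mp (Finset.mem_sdiff.mp hu).1
    have hv' : v ∉ Sf := Finset.mem_compl.mp (Finset.mem_sdiff.mp hv).1
    rcases hSvc hadj with h | h
    · exact hu' ((hSfS u).mpr h)
    · exact hv' ((hSfS v).mpr h)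
  · -- no edges C–R
    intro u hu v hv hadj
    have huI : u ∉ Sf := Finset.mem_compl.mp (Finset.mem_sdiff.mp hu).1
    have huN : u ∉ N T0 := (Finset.mem_sdiff.mp hu).2
    rcases Finset.mem_union.mp hv with hvT | hvN
    · exact huN ((hNmem T0 u).mpr ⟨huI, v, hvT, hadj.symm⟩)
    · have hvI : v ∉ Sf := Finset.mem_compl.mp (hNT0sub hvN)
      rcases hSvc hadj with h | h
      · exact huI ((hSfS u).mpr h)
      · exact hvI ((hSfS v).mpr h)
  · -- cover
    intro v
    by_cases hvS : v ∈ Sf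
    · by_cases hvT : v ∈ T0
      · exact Or.inr (Or.inr (Finset.mem_coe.mpr (Finset.mem_union_left _ hvT)))
      · exact Or.inr (Or.inl (Finset.mem_coe.mpr (Finset.mem_sdiff.mpr ⟨hvS, hvT⟩)))
    · by_cases hvN : v ∈ N T0
      · exact Or.inr (Or.inr (Finset.mem_coe.mpr (Finset.mem_union_right _ hvN)))
      · exact Or.inl (Finset.mem_coe.mpr
          (Finset.mem_sdiff.mpr ⟨Finset.mem_compl.mpr hvS, hvN⟩))
  · -- Disjoint C H
    rw [Set.disjoint_left]
    intro v hv hv'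
    exact (Finset.mem_compl.mp (Finset.mem_sdiff.mp hv).1) (Finset.mem_sdiff.mp hv').1
  · -- Disjoint C R
    rw [Set.disjoint_left]
    intro v hv hv'
    have h1 := Finset.mem_sdiff.mp hv
    rcases Finset.mem_union.mp hv' with h | h
    · exact (Finset.mem_compl.mp h1.1) (hT0S h)
    · exact h1.2 h
  · -- Disjoint H R
    rw [Set.disjoint_left]
    intro v hv hv'
    have h1 := Finset.mem_sdiff.mp hv
    rcases Finset.mem_union.mp hv' with h | h
    · exact h1.2 h
    · exact (Finset.mem_compl.mp (hNT0sub h)) h1.1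
  · -- matching
    intro h hh
    have hh' : h ∈ Hf := Finset.mem_coe.mp hh
    have hmem := hf0mem ⟨h, hh'⟩
    simp only [ht, Finset.mem_sdiff, hNmem] at hmem
    obtain ⟨⟨hfI, x, hx, hadj⟩, hfN⟩ := hmem
    rw [Finset.mem_singleton.mp hx] at hadj
    have hval : f h = f0 ⟨h, hh'⟩ := by simp [hf, hh']
    refine ⟨?_, ?_⟩
    · rw [hval]
      exact Finset.mem_coe.mpr (Finset.mem_sdiff.mpr ⟨Finset.mem_compl.mpr hfI,
        fun hc => hfN ((hNmem T0 _).mp hc)⟩)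
    · rw [hval]; exact hadj
  · -- InjOn f
    intro a ha b hb hab
    have ha' : a ∈ Hf := Finset.mem_coe.mp ha
    have hb' : b ∈ Hf := Finset.mem_coe.mp hb
    simp only [hf, dif_pos ha', dif_pos hb'] at hab
    exact congrArg Subtype.val (hf0inj hab)
  · -- |R| ≤ 2k
    have h1 : T0.card ≤ k := le_trans (Finset.card_le_card hT0S) hSfcard
    have h2 : (N T0).card ≤ k := le_trans hNT0card h1
    calc (↑Rf : Set V).ncard = Rf.card := Set.ncard_coe_finset _
      _ ≤ T0.card + (N T0).card := Finset.card_union_le _ _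
      _ ≤ 2 * k := by omega
end
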